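/- For a single column D_1 ⊆ [n] viewed as a one-column diagram, the number of subsets C_1 ⊆ [n] with C_1 ≤ D_1 is at least rank((D_1)) + 1, where rank((D_1)) = Σ_{i ∈ D_1} #{k ≤ i : k ∉ D_1}. -/

import Mathlib

open Finset

/-- `colLE R S`: `R ≤ S` for columns, i.e. `|R| = |S|` and the `k`-th least element of `R`
does not exceed the `k`-th least element of `S` for each `k`. -/
def colLE {α : Type*} [LinearOrder α] (R S : Finset α) : Prop :=
  R.card = S.card ∧
  ∀ (k : ℕ) (hR : k < (R.sort (· ≤ ·)).length) (hS : k < (S.sort (· ≤ ·)).length),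
    (R.sort (· ≤ ·)).get ⟨k, hR⟩ ≤ (S.sort (· ≤ ·)).get ⟨k, hS⟩

/-- Rank of a single column `S ⊆ [n] = {1,…,n}`:
`Σ_{i ∈ S} #{k : 1 ≤ k ≤ i, k ∉ S}`. -/
def colRank (S : Finset ℕ) : ℕ :=
  ∑ i ∈ S, ((Finset.Icc 1 i).filter (fun k => k ∉ S)).card

lemma emb_le_iff (C : Finset ℕ) {m : ℕ} (h : C.card = m) (k : Fin m) (x : ℕ) :
    C.orderEmbOfFin h k ≤ x ↔ (k : ℕ) + 1 ≤ (C.filter (· ≤ x)).card := by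
  constructor
  · intro hx
    have hsub : (Finset.Iic k).image (C.orderEmbOfFin h) ⊆ C.filter (· ≤ x) := by
      intro c hc
      simp only [mem_image, mem_Iic] at hc
      obtain ⟨j, hj, rfl⟩ := hc
      refine mem_filter.2 ⟨orderEmbOfFin_mem _ _ _, le_trans ?_ hx⟩
      exact (C.orderEmbOfFin h).monotone hj
    have := Finset.card_le_card hsub
    rwa [Finset.card_image_of_injective _ (C.orderEmbOfFin h).injective,
      Fin.card_Iic] at this
  · intro hc
    by_contra hx
    push_neg at hx
    have hsub : C.filter (· ≤ x) ⊆ (Finset.Iio k).image (C.orderEmbOfFin h) := by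
      intro c hcmem
      rw [mem_filter] at hcmem
      have : c ∈ Set.range (C.orderEmbOfFin h) := by
        rw [range_orderEmbOfFin]; exact hcmem.1
      obtain ⟨j, rfl⟩ := this
      have hj : j < k := by
        rw [← (C.orderEmbOfFin h).strictMono.lt_iff_lt]
        exact lt_of_le_of_lt hcmem.2 hx
      exact mem_image.2 ⟨j, Finset.mem_Iio.2 hj, rfl⟩
    have := Finset.card_le_card hsub
    rw [Finset.card_image_of_injective _ (C.orderEmbOfFin h).injective,
      Fin.card_Iio] at this
    omega

lemma colLE_of_counts {C S : Finset ℕ} (hcard : C.card = S.card)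
    (hcnt : ∀ x, (S.filter (· ≤ x)).card ≤ (C.filter (· ≤ x)).card) : colLE C S := by
  refine ⟨hcard, fun k hR hS => ?_⟩
  have hm : k < S.card := by simpa using hS
  have hC : (C.sort (· ≤ ·)).get ⟨k, hR⟩ = C.orderEmbOfFin hcard ⟨k, hm⟩ := by
    rw [orderEmbOfFin_apply]; rfl
  have hS' : (S.sort (· ≤ ·)).get ⟨k, hS⟩ = S.orderEmbOfFin rfl ⟨k, hm⟩ := by
    rw [orderEmbOfFin_apply]; rfl
  rw [hC, hS']
  set x := S.orderEmbOfFin rfl ⟨k, hm⟩ with hx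
  rw [emb_le_iff C hcard ⟨k, hm⟩ x]
  exact le_trans ((emb_le_iff S rfl ⟨k, hm⟩ x).1 le_rfl) (hcnt x)

lemma colLE_refl (S : Finset ℕ) : colLE S S := ⟨rfl, fun _ _ _ => le_rfl⟩

lemma colLE_swap {D : Finset ℕ} {a b : ℕ} (ha : a ∈ D) (hb : b ∉ D) (hba : b ≤ a) :
    colLE (insert b (D.erase a)) D := by
  have hbe : b ∉ D.erase a := fun h => hb (Finset.mem_of_mem_erase h)
  have hcard : (insert b (D.erase a)).card = D.card := by
    rw [Finset.card_insert_of_notMem hbe, Finset.card_erase_of_mem ha]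
    have := Finset.card_pos.2 ⟨a, ha⟩
    omega
  refine colLE_of_counts hcard (fun x => ?_)
  have h1 : D.filter (· ≤ x) ⊆ insert a ((D.erase a).filter (· ≤ x)) := by
    intro d hd
    rw [mem_filter] at hd
    rcases eq_or_ne d a with rfl | hne
    · exact Finset.mem_insert_self _ _
    · exact Finset.mem_insert_of_mem (mem_filter.2 ⟨Finset.mem_erase.2 ⟨hne, hd.1⟩, hd.2⟩)
  have h1' : (D.filter (· ≤ x)).card ≤ ((D.erase a).filter (· ≤ x)).card + 1 := by
    calc (D.filter (· ≤ x)).card ≤ (insert a ((D.erase a).filter (· ≤ x))).card :=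
          Finset.card_le_card h1
      _ ≤ ((D.erase a).filter (· ≤ x)).card + 1 := Finset.card_insert_le _ _
  rcases le_or_gt b x with hbx | hxb
  · -- b ≤ x : C.filter has card (erase filter) + 1
    have : (insert b (D.erase a)).filter (· ≤ x)
        = insert b ((D.erase a).filter (· ≤ x)) := by
      rw [Finset.filter_insert, if_pos hbx]
    rw [this, Finset.card_insert_of_notMem (fun h => hbe (Finset.mem_of_mem_filter _ h))]
    exact h1'
  · -- x < b ≤ a : a > x so D.filter = (erase).filter ⊆ C.filter
    have hax : ¬ a ≤ x := by omega
    apply Finset.card_le_card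
    intro d hd
    rw [mem_filter] at hd
    have hda : d ≠ a := fun h => hax (h ▸ hd.2)
    exact mem_filter.2 ⟨Finset.mem_insert_of_mem (Finset.mem_erase.2 ⟨hda, hd.1⟩), hd.2⟩

/-- For a single column `D₁ ⊆ [n]`, the number of columns `C₁ ≤ D₁`
is at least `rank((D₁)) + 1`. -/
theorem stmt_8 (n : ℕ) (D1 : Finset ℕ) (hsub : D1 ⊆ Finset.Icc 1 n) :
    Set.ncard {C : Finset ℕ | C ⊆ Finset.Icc 1 n ∧ colLE C D1}
      ≥ colRank D1 + 1 := by
  classical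
  set σ : Finset (Σ _ : ℕ, ℕ) :=
    D1.sigma (fun i => (Finset.Icc 1 i).filter (fun k => k ∉ D1)) with hσ
  have hσcard : σ.card = colRank D1 := by
    rw [hσ, Finset.card_sigma]; rfl
  set f : (Σ _ : ℕ, ℕ) → Finset ℕ := fun p => insert p.2 (D1.erase p.1) with hf
  -- facts about members of σ
  have hmem : ∀ p ∈ σ, p.1 ∈ D1 ∧ p.2 ∉ D1 ∧ 1 ≤ p.2 ∧ p.2 ≤ p.1 := by
    intro p hp
    rw [hσ, Finset.mem_sigma, mem_filter, Finset.mem_Icc] at hp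
    exact ⟨hp.1, hp.2.2, hp.2.1.1, hp.2.1.2⟩
  -- D1 \ f p = {p.1}, f p \ D1 = {p.2}
  have hkey : ∀ p ∈ σ, p.1 ∉ f p ∧ ∀ d ∈ D1, d ≠ p.1 → d ∈ f p := by
    intro p hp
    obtain ⟨h1, h2, _, _⟩ := hmem p hp
    constructor
    · intro h
      rcases Finset.mem_insert.1 h with h | h
      · exact h2 (h ▸ h1)
      · exact (Finset.mem_erase.1 h).1 rfl
    · intro d hd hne
      exact Finset.mem_insert_of_mem (Finset.mem_erase.2 ⟨hne, hd⟩)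
  -- injectivity of f on σ
  have hinj : Set.InjOn f σ := by
    intro p hp q hq hpq
    obtain ⟨hp1, hp2, _, _⟩ := hmem p hp
    obtain ⟨hq1, hq2, _, _⟩ := hmem q hq
    obtain ⟨hpn, hpall⟩ := hkey p hp
    obtain ⟨hqn, hqall⟩ := hkey q hq
    have h11 : p.1 = q.1 := by
      by_contra hne
      exact hpn (hpq ▸ hqall p.1 hp1 hne)
    have h22 : p.2 = q.2 := by
      have : p.2 ∈ f q := hpq ▸ Finset.mem_insert_self _ _
      rcases Finset.mem_insert.1 this with h | h
      · exact h
      · exact absurd (Finset.mem_of_mem_erase h) hp2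
    exact Sigma.ext h11 (heq_of_eq h22)
  -- D1 is not of the form f p
  have hD1 : D1 ∉ σ.image f := by
    intro h
    obtain ⟨p, hp, hfp⟩ := Finset.mem_image.1 h
    obtain ⟨_, h2, _, _⟩ := hmem p hp
    exact h2 (hfp ▸ Finset.mem_insert_self _ _)
  -- the finite collection
  set F : Finset (Finset ℕ) := insert D1 (σ.image f) with hF
  have hFcard : F.card = colRank D1 + 1 := by
    rw [hF, Finset.card_insert_of_notMem hD1, Finset.card_image_of_injOn hinj, hσcard]
  -- every member of F is in the set
  have hFsub : ↑F ⊆ {C : Finset ℕ | C ⊆ Finset.Icc 1 n ∧ colLE C D1} := by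
    intro C hC
    rw [hF, Finset.coe_insert, Set.mem_insert_iff] at hC
    rcases hC with rfl | hC
    · exact ⟨hsub, colLE_refl _⟩
    · rw [Finset.coe_image, Set.mem_image] at hC
      obtain ⟨p, hp, rfl⟩ := hC
      obtain ⟨h1, h2, h3, h4⟩ := hmem p hp
      constructor
      · intro d hd
        rcases Finset.mem_insert.1 hd with rfl | hd
        · have := hsub h1
          rw [Finset.mem_Icc] at this ⊢
          omega
        · exact hsub (Finset.mem_of_mem_erase hd)
      · exact colLE_swap h1 h2 h4
  -- conclude
  have hfin : {C : Finset ℕ | C ⊆ Finset.Icc 1 n ∧ colLE C D1}.Finite := by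
    apply Set.Finite.subset ((Finset.Icc 1 n).powerset.finite_toSet)
    intro C hC
    simp only [Finset.coe_powerset, Set.mem_preimage, Set.mem_powerset_iff,
      Finset.coe_subset]
    exact hC.1
  calc colRank D1 + 1 = F.card := hFcard.symm
    _ = Set.ncard (↑F : Set (Finset ℕ)) := (Set.ncard_coe_finset F).symm
    _ ≤ Set.ncard {C : Finset ℕ | C ⊆ Finset.Icc 1 n ∧ colLE C D1} :=
        Set.ncard_le_ncard hFsub hfin
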